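/- For every odd integer N_p0 with 1 ≤ N_p0 ≤ 3^{m-1}, there exists a valid pilot assignment vector p ∈ P_L with N_pil(p) = N_p0; conversely, every p ∈ P_L has odd pilot length N_pil(p) with 1 ≤ N_pil(p) ≤ 3^{m-1}. In other words, {N_pil(p) : p ∈ P_L} = {1, 3, 5, …, 3^{m-1}} (Lemma 1). -/

import Mathlib

/-- A pilot assignment vector `p = (p_0, …, p_{m-1})` is valid if `0 ≤ p_i ≤ 3^i`
for every `i` and `Σ_i p_i · 3^{-i} = 1`. -/
def validP {m : ℕ} (p : Fin m → ℤ) : Prop :=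
  (∀ i, 0 ≤ p i ∧ p i ≤ 3 ^ (i : ℕ)) ∧
  (∑ i, (p i : ℝ) / 3 ^ (i : ℕ)) = 1

/-- The pilot length `N_pil(p) = Σ_i p_i`. -/
def Npil {m : ℕ} (p : Fin m → ℤ) : ℤ := ∑ i, p i

/-- The real normalization condition is equivalent to an integer equation. -/
lemma real_sum_iff {m : ℕ} (hm : 1 ≤ m) (p : Fin m → ℤ) :
    (∑ i, (p i : ℝ) / 3 ^ (i : ℕ)) = 1 ↔
    (∑ i, p i * 3 ^ (m - 1 - (i : ℕ))) = 3 ^ (m - 1) := by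
  have h3 : (3 : ℝ) ^ (m - 1) ≠ 0 := by positivity
  have key : (∑ i, (p i : ℝ) / 3 ^ (i : ℕ)) * 3 ^ (m - 1) =
      ∑ i, (p i : ℝ) * 3 ^ (m - 1 - (i : ℕ)) := by
    rw [Finset.sum_mul]
    refine Finset.sum_congr rfl fun i _ => ?_
    have hi : (i : ℕ) ≤ m - 1 := by have := i.isLt; omega
    have hp : (3 : ℝ) ^ (m - 1 - (i : ℕ)) * 3 ^ (i : ℕ) = 3 ^ (m - 1) := by
      rw [← pow_add]; congr 1; omega
    have h3i : (3 : ℝ) ^ (i : ℕ) ≠ 0 := by positivity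
    field_simp
    rw [← hp]; ring
  constructor
  · intro h
    rw [h, one_mul] at key
    have : ((∑ i, p i * 3 ^ (m - 1 - (i : ℕ)) : ℤ) : ℝ) = ((3 ^ (m - 1) : ℤ) : ℝ) := by
      push_cast
      rw [← key]
    exact_mod_cast this
  · intro h
    apply mul_right_cancel₀ h3
    rw [key, one_mul]
    exact_mod_cast congrArg (Int.cast : ℤ → ℝ) h

/-- Forward direction: a valid pilot vector has odd length in `[1, 3^{m-1}]`. -/
lemma forward_dir {m : ℕ} (p : Fin m → ℤ)
    (hb : ∀ i, 0 ≤ p i ∧ p i ≤ 3 ^ (i : ℕ))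
    (hs : (∑ i, p i * 3 ^ (m - 1 - (i : ℕ))) = 3 ^ (m - 1)) :
    Odd (∑ i, p i) ∧ 1 ≤ ∑ i, p i ∧ (∑ i, p i) ≤ 3 ^ (m - 1) := by
  set N := ∑ i, p i with hN
  have hNle : N ≤ 3 ^ (m - 1) := by
    rw [← hs]
    refine Finset.sum_le_sum fun i _ => ?_
    have h1 : (1 : ℤ) ≤ 3 ^ (m - 1 - (i : ℕ)) := one_le_pow₀ (by norm_num)
    exact le_mul_of_one_le_right (hb i).1 h1
  have heven : Even ((3 ^ (m - 1) : ℤ) - N) := by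
    rw [← hs, hN, ← Finset.sum_sub_distrib]
    refine Finset.even_sum _ fun i _ => ?_
    have : p i * 3 ^ (m - 1 - (i : ℕ)) - p i = p i * (3 ^ (m - 1 - (i : ℕ)) - 1) := by ring
    rw [this]
    refine (Even.mul_left ?_ _)
    have hodd : Odd ((3 : ℤ) ^ (m - 1 - (i : ℕ))) := Odd.pow (by decide)
    exact Int.even_sub_one.mpr (by simpa [Int.even_iff, Int.odd_iff] using hodd)
  have hodd3 : Odd ((3 : ℤ) ^ (m - 1)) := Odd.pow (by decide)
  have hoddN : Odd N := by
    have := hodd3.sub_even heven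
    simpa using this
  have hN0 : 0 ≤ N := Finset.sum_nonneg fun i _ => (hb i).1
  refine ⟨hoddN, ?_, hNle⟩
  obtain ⟨t, ht⟩ := hoddN
  omega

/-- Backward direction: every odd integer in `[1, 3^{m-1}]` is achievable. -/
lemma backward_dir {m : ℕ} (hm : 2 ≤ m) (N : ℤ) (hodd : Odd N) (h1 : 1 ≤ N)
    (h2 : N ≤ 3 ^ (m - 1)) :
    ∃ p : Fin m → ℤ, (∀ i, 0 ≤ p i ∧ p i ≤ 3 ^ (i : ℕ)) ∧
      (∑ i, p i * 3 ^ (m - 1 - (i : ℕ))) = 3 ^ (m - 1) ∧ ∑ i, p i = N := by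
  set n := N.toNat with hn
  have hnN : (n : ℤ) = N := Int.toNat_of_nonneg (by omega)
  set k := max (Nat.clog 3 n) 1 with hk
  have hk1 : 1 ≤ k := le_max_right _ _
  have hnm : n ≤ 3 ^ (m - 1) := by
    have : (n : ℤ) ≤ ((3 : ℕ) ^ (m - 1) : ℤ) := by push_cast; omega
    exact_mod_cast this
  have hkm : k ≤ m - 1 := by
    have h1' : Nat.clog 3 n ≤ m - 1 := (Nat.clog_le_iff_le_pow (by norm_num)).mpr hnm
    omega
  have hup : N ≤ 3 ^ k := by
    have h1' : n ≤ 3 ^ Nat.clog 3 n := Nat.le_pow_clog (by norm_num) n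
    have h2' : (3 : ℕ) ^ Nat.clog 3 n ≤ 3 ^ k := Nat.pow_le_pow_right (by norm_num) (le_max_left _ _)
    have : (n : ℤ) ≤ ((3 : ℕ) ^ k : ℤ) := by exact_mod_cast h1'.trans h2'
    push_cast at this; omega
  have hlow : (3 : ℤ) ^ (k - 1) ≤ N := by
    rcases le_or_gt (Nat.clog 3 n) 1 with h | h
    · have : k = 1 := by omega
      simpa [this] using h1
    · have hkc : k = Nat.clog 3 n := by omega
      have : ¬ (n ≤ 3 ^ (k - 1)) := by
        intro hc
        have := (Nat.clog_le_iff_le_pow (by norm_num : 1 < 3)).mpr hc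
        omega
      have h3 : (3 : ℕ) ^ (k - 1) < n := by omega
      have : ((3 : ℕ) ^ (k - 1) : ℤ) < (n : ℤ) := by exact_mod_cast h3
      push_cast at this; omega
  obtain ⟨t, ht⟩ := hodd
  obtain ⟨s, hs⟩ : Odd ((3 : ℤ) ^ k) := Odd.pow (by decide)
  have hmul : (3 : ℤ) ^ k = 3 * 3 ^ (k - 1) := by
    rw [← pow_succ']; congr 1; omega
  set c1 := s - t with hc1
  set c2 := 3 * t - s + 1 with hc2
  have hsum : c1 + c2 = N := by omega
  have hwsum : 3 * c1 + c2 = 3 ^ k := by omega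
  have hc1nn : 0 ≤ c1 := by omega
  have hc1le : c1 ≤ 3 ^ (k - 1) := by omega
  have hc2nn : 0 ≤ c2 := by omega
  have hc2le : c2 ≤ 3 ^ k := by omega
  set a : Fin m := ⟨k - 1, by omega⟩ with ha
  set b : Fin m := ⟨k, by omega⟩ with hb
  have hab : a ≠ b := by
    simp only [ha, hb, Fin.mk.injEq, ne_eq]
    omega
  refine ⟨fun i => if i = a then c1 else if i = b then c2 else 0, ?_, ?_, ?_⟩
  · intro i
    by_cases hia : i = a
    · subst hia; simp only [if_pos rfl]; exact ⟨hc1nn, hc1le⟩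
    · by_cases hib : i = b
      · subst hib; simp only [if_neg hia, if_pos rfl]; exact ⟨hc2nn, hc2le⟩
      · simp only [if_neg hia, if_neg hib]
        exact ⟨le_refl 0, by positivity⟩
  · have split : ∀ i : Fin m,
        (if i = a then c1 else if i = b then c2 else 0) * 3 ^ (m - 1 - (i : ℕ)) =
        (if i = a then c1 * 3 ^ (m - 1 - (k - 1)) else 0) +
        (if i = b then c2 * 3 ^ (m - 1 - k) else 0) := by
      intro i
      by_cases hia : i = a
      · subst hia; simp [if_neg hab]; exact Or.inl rfl
      · by_cases hib : i = b
        · subst hib; simp [if_neg hia]; exact Or.inl rfl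
        · simp [hia, hib]
    rw [Finset.sum_congr rfl (fun i _ => split i), Finset.sum_add_distrib,
      Finset.sum_ite_eq' Finset.univ a, Finset.sum_ite_eq' Finset.univ b]
    simp only [Finset.mem_univ, if_pos]
    have he : m - 1 - (k - 1) = (m - 1 - k) + 1 := by omega
    rw [he]
    calc c1 * 3 ^ (m - 1 - k + 1) + c2 * 3 ^ (m - 1 - k)
        = (3 * c1 + c2) * 3 ^ (m - 1 - k) := by ring
      _ = 3 ^ k * 3 ^ (m - 1 - k) := by rw [hwsum]
      _ = 3 ^ (m - 1) := by rw [← pow_add]; congr 1; omega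
  · have split : ∀ i : Fin m,
        (if i = a then c1 else if i = b then c2 else 0) =
        (if i = a then c1 else 0) + (if i = b then c2 else 0) := by
      intro i
      by_cases hia : i = a
      · subst hia; simp [if_neg hab]
      · by_cases hib : i = b
        · subst hib; simp [if_neg hia]
        · simp [hia, hib]
    rw [Finset.sum_congr rfl (fun i _ => split i), Finset.sum_add_distrib,
      Finset.sum_ite_eq' Finset.univ a, Finset.sum_ite_eq' Finset.univ b]
    simp only [Finset.mem_univ, if_pos]
    omega

/-- Lemma 1: the set of achievable pilot lengths of valid pilot assignment vectors
is exactly the set of odd integers between `1` and `3^{m-1}`. -/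
theorem pilot_length_range (m : ℕ) (hm : 2 ≤ m) :
    {N : ℤ | ∃ p : Fin m → ℤ, validP p ∧ Npil p = N} =
    {N : ℤ | Odd N ∧ 1 ≤ N ∧ N ≤ 3 ^ (m - 1)} := by
  ext N
  simp only [Set.mem_setOf_eq]
  constructor
  · rintro ⟨p, ⟨hb, hs⟩, rfl⟩
    exact forward_dir p hb ((real_sum_iff (by omega) p).mp hs)
  · rintro ⟨hodd, h1, h2⟩
    obtain ⟨p, hb, hs, hN⟩ := backward_dir hm N hodd h1 h2
    exact ⟨p, ⟨hb, (real_sum_iff (by omega) p).mpr hs⟩, hN⟩
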